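/- Let N ≥ 1 and let q ≥ 2 be an integer with largest prime factor p_max. For each prime p ≤ p_max let w_p be the probability vector on N states with value (p−1)/p at state 0, value 1/p at state N−1, and 0 elsewhere. Then for all nonnegative integers x_0, …, x_{N−1} with ∑_k x_k = q, the probability vector (x_0/q, …, x_{N−1}/q) is realizable from the switch set {w_p : p prime, p ≤ p_max} (with some finite number of pswitches). -/

import Mathlib

noncomputable section

/-- Series composition: distribution of `min` of two independent states. -/
def smin {N : ℕ} (p q : Fin N → ℝ) : Fin N → ℝ :=
  fun k => ∑ i, ∑ j, if min i j = k then p i * q j else 0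

/-- Parallel composition: distribution of `max` of two independent states. -/
def smax {N : ℕ} (p q : Fin N → ℝ) : Fin N → ℝ :=
  fun k => ∑ i, ∑ j, if max i j = k then p i * q j else 0

/-- The point mass at state `s`. -/
def delta {N : ℕ} (s : Fin N) : Fin N → ℝ := fun i => if i = s then 1 else 0

/-- `Realizable S p m`: the vector `p` is obtained from point masses (0 pswitches)
and elements of the switch set `S` (1 pswitch each) by series and parallel
compositions, using `m` pswitches in total. -/
inductive Realizable {N : ℕ} (S : Set (Fin N → ℝ)) : (Fin N → ℝ) → ℕ → Prop
  | point (s : Fin N) : Realizable S (delta s) 0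
  | single {p : Fin N → ℝ} : p ∈ S → Realizable S p 1
  | series {p q : Fin N → ℝ} {a b : ℕ} :
      Realizable S p a → Realizable S q b → Realizable S (smin p q) (a + b)
  | parallel {p q : Fin N → ℝ} {a b : ℕ} :
      Realizable S p a → Realizable S q b → Realizable S (smax p q) (a + b)

/-- The `N`-state ½-pswitch: probability ½ on state `0`, ½ on state `N-1`,
and `0` elsewhere. -/
def halfSwitch (N : ℕ) : Fin N → ℝ :=
  fun i => (if (i : ℕ) = 0 then (1 : ℝ) / 2 else 0) + (if (i : ℕ) = N - 1 then (1 : ℝ) / 2 else 0)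

/-- The complexity function `f(n,N)`: `2^n - 1` for `n ≤ ⌈log₂ N⌉` and
`(N-1)(n - ⌈log₂ N⌉) + 2^{⌈log₂ N⌉} - 1` for `n ≥ ⌈log₂ N⌉`. -/
def f (n N : ℕ) : ℕ :=
  if n ≤ Nat.clog 2 N then 2 ^ n - 1
  else (N - 1) * (n - Nat.clog 2 N) + 2 ^ (Nat.clog 2 N) - 1

/-- The pswitch `w_p`: probability `(p-1)/p` on state `0`, `1/p` on state `N-1`,
and `0` elsewhere. -/
def qSwitch (N k : ℕ) : Fin N → ℝ :=
  fun i => (if (i : ℕ) = 0 then ((k : ℝ) - 1) / k else 0) +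
    (if (i : ℕ) = N - 1 then 1 / (k : ℝ) else 0)



section AuxLemmas


lemma ite_max_split {N : ℕ} (i j k : Fin N) (a : ℝ) :
    (if max i j = k then a else 0) =
      (if i = k ∧ j ≤ k then a else 0) + (if j = k ∧ i < k then a else 0) := by
  rcases le_total i j with h | h
  · rw [max_eq_right h]
    by_cases hjk : j = k
    · subst hjk
      by_cases hik : i = j
      · subst hik; simp
      · simp [hik, lt_of_le_of_ne h hik]
    · have h2 : ¬(i = k ∧ j ≤ k) := by rintro ⟨rfl, hj⟩; exact hjk (le_antisymm hj h)
      simp [hjk, h2]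
  · rw [max_eq_left h]
    by_cases hik : i = k
    · subst hik
      simp [h, lt_irrefl]
    · have h3 : ¬(j = k ∧ i < k) := by rintro ⟨rfl, hi⟩; exact absurd h (not_le.mpr hi)
      simp [hik, h3]

lemma ite_min_split {N : ℕ} (i j k : Fin N) (a : ℝ) :
    (if min i j = k then a else 0) =
      (if i = k ∧ k ≤ j then a else 0) + (if j = k ∧ k < i then a else 0) := by
  rcases le_total i j with h | h
  · rw [min_eq_left h]
    by_cases hik : i = k
    · subst hik; simp [h, lt_irrefl]
    · have h3 : ¬(j = k ∧ k < i) := by rintro ⟨rfl, hi⟩; exact absurd h (not_le.mpr hi)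
      simp [hik, h3]
  · rw [min_eq_right h]
    by_cases hjk : j = k
    · subst hjk
      by_cases hik : i = j
      · subst hik; simp
      · simp [hik, lt_of_le_of_ne h fun e => hik e.symm]
    · have h2 : ¬(i = k ∧ k ≤ j) := by rintro ⟨rfl, hj⟩; exact hjk (le_antisymm h hj)
      simp [hjk, h2]

lemma smax_formula {N : ℕ} (u v : Fin N → ℝ) (k : Fin N) :
    smax u v k = u k * (∑ j ∈ Finset.univ.filter (fun j => j ≤ k), v j)
      + (∑ i ∈ Finset.univ.filter (fun i => i < k), u i) * v k := by
  unfold smax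
  have h : ∀ i j : Fin N, (if max i j = k then u i * v j else 0)
      = (if i = k then (if j ≤ k then u i * v j else 0) else 0)
        + (if j = k then (if i < k then u i * v j else 0) else 0) := by
    intro i j
    rw [ite_max_split i j k (u i * v j), ite_and, ite_and]
  simp only [h, Finset.sum_add_distrib]
  congr 1
  · rw [Finset.sum_eq_single k]
    · simp only [eq_self_iff_true, if_true]
      rw [Finset.mul_sum, Finset.sum_filter]
    · intro i _ hi; simp [hi]
    · intro h'; exact absurd (Finset.mem_univ k) h'
  · simp only [Finset.sum_ite_eq', Finset.mem_univ, if_true]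
    rw [Finset.sum_mul, Finset.sum_filter]

lemma smax_add_left {N : ℕ} (f g v : Fin N → ℝ) (k : Fin N) :
    smax (fun i => f i + g i) v k = smax f v k + smax g v k := by
  unfold smax
  rw [← Finset.sum_add_distrib]
  refine Finset.sum_congr rfl fun i _ => ?_
  rw [← Finset.sum_add_distrib]
  refine Finset.sum_congr rfl fun j _ => ?_
  split <;> ring

lemma smin_add_left {N : ℕ} (f g v : Fin N → ℝ) (k : Fin N) :
    smin (fun i => f i + g i) v k = smin f v k + smin g v k := by
  unfold smin
  rw [← Finset.sum_add_distrib]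
  refine Finset.sum_congr rfl fun i _ => ?_
  rw [← Finset.sum_add_distrib]
  refine Finset.sum_congr rfl fun j _ => ?_
  split <;> ring

lemma smax_smul_left {N : ℕ} (a : ℝ) (f v : Fin N → ℝ) (k : Fin N) :
    smax (fun i => a * f i) v k = a * smax f v k := by
  unfold smax
  rw [Finset.mul_sum]
  refine Finset.sum_congr rfl fun i _ => ?_
  rw [Finset.mul_sum]
  refine Finset.sum_congr rfl fun j _ => ?_
  split <;> ring

lemma smax_dz {N : ℕ} (hN : 0 < N) (a : ℝ) (v : Fin N → ℝ) (k : Fin N) :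
    smax (fun i => if (i : ℕ) = 0 then a else 0) v k = a * v k := by
  unfold smax
  rw [Finset.sum_eq_single (⟨0, hN⟩ : Fin N)]
  · have hz : ∀ j : Fin N, max (⟨0, hN⟩ : Fin N) j = j :=
      fun j => max_eq_right (by simp [Fin.le_def])
    simp only [hz]
    rw [Finset.sum_ite_eq' Finset.univ k]
    simp [Finset.mem_univ]
  · intro i _ hi
    have : (i : ℕ) ≠ 0 := fun h => hi (Fin.ext h)
    simp [this]
  · intro h'; exact absurd (Finset.mem_univ _) h'

lemma smin_dz {N : ℕ} (hN : 0 < N) (a : ℝ) (v : Fin N → ℝ) (k : Fin N) :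
    smin (fun i => if (i : ℕ) = 0 then a else 0) v k
      = if (k : ℕ) = 0 then a * ∑ j, v j else 0 := by
  unfold smin
  rw [Finset.sum_eq_single (⟨0, hN⟩ : Fin N)]
  · have hz : ∀ j : Fin N, min (⟨0, hN⟩ : Fin N) j = ⟨0, hN⟩ :=
      fun j => min_eq_left (by simp [Fin.le_def])
    simp only [hz]
    by_cases hk : (k : ℕ) = 0
    · have he : (⟨0, hN⟩ : Fin N) = k := Fin.ext (by simp [hk])
      simp [he, hk, Finset.mul_sum]
    · have he : (⟨0, hN⟩ : Fin N) ≠ k := fun h => hk (by rw [← h])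
      simp [he, hk]
  · intro i _ hi
    have : (i : ℕ) ≠ 0 := fun h => hi (Fin.ext h)
    simp [this]
  · intro h'; exact absurd (Finset.mem_univ _) h'

lemma smin_dtop {N : ℕ} (hN : 0 < N) (a : ℝ) (v : Fin N → ℝ) (k : Fin N) :
    smin (fun i => if (i : ℕ) = N - 1 then a else 0) v k = a * v k := by
  unfold smin
  rw [Finset.sum_eq_single (⟨N - 1, by omega⟩ : Fin N)]
  · have hz : ∀ j : Fin N, min (⟨N - 1, by omega⟩ : Fin N) j = j :=
      fun j => min_eq_right (by simp [Fin.le_def]; omega)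
    simp only [hz]
    rw [Finset.sum_ite_eq' Finset.univ k]
    simp [Finset.mem_univ]
  · intro i _ hi
    have : (i : ℕ) ≠ N - 1 := fun h => hi (Fin.ext h)
    simp [this]
  · intro h'; exact absurd (Finset.mem_univ _) h'

lemma smax_ordered {N : ℕ} (u v : Fin N → ℝ) (hv : ∑ j, v j = 1)
    (hsep : ∀ i j, u i ≠ 0 → v j ≠ 0 → j ≤ i) (k : Fin N) :
    smax u v k = u k := by
  rw [smax_formula]
  have h2 : (∑ i ∈ Finset.univ.filter (fun i => i < k), u i) * v k = 0 := by
    by_cases hk : v k = 0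
    · simp [hk]
    · rw [Finset.sum_eq_zero, zero_mul]
      intro i hi
      by_contra hu
      exact absurd (hsep i k hu hk) (not_le.mpr (Finset.mem_filter.mp hi).2)
  rw [h2, add_zero]
  by_cases hu : u k = 0
  · simp [hu]
  · have h1 : (∑ j ∈ Finset.univ.filter (fun j => j ≤ k), v j) = 1 := by
      rw [← hv]
      refine Finset.sum_subset (Finset.filter_subset _ _) (fun j _ hj => ?_)
      by_contra hvj
      exact hj (Finset.mem_filter.mpr ⟨Finset.mem_univ j, hsep k j hu hvj⟩)
    rw [h1, mul_one]

lemma key (N : ℕ) (hN : 0 < N) (pmax : ℕ) :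
    ∀ n, 1 ≤ n → (∀ t ∈ n.primeFactors, t ≤ pmax) →
      ∀ x : Fin N → ℕ, (∑ k, x k = n) →
      ∃ m, Realizable {v : Fin N → ℝ | ∃ t : ℕ, t.Prime ∧ t ≤ pmax ∧ v = qSwitch N t}
        (fun i => (x i : ℝ) / n) m := by
  intro n
  induction n using Nat.strong_induction_on with
  | _ n IH =>
    intro hn hfac x hx
    rcases eq_or_lt_of_le hn with h1 | h2
    · -- n = 1 : point mass
      obtain ⟨s, hs⟩ : ∃ s, x s ≠ 0 := by
        by_contra hc
        push_neg at hc
        simp only [hc, Finset.sum_const_zero] at hx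
        omega
      have hxs : x s = 1 := by
        have h1' : x s ≤ ∑ k, x k :=
          Finset.single_le_sum (fun i _ => Nat.zero_le _) (Finset.mem_univ s)
        omega
      have hzero : ∀ j, j ≠ s → x j = 0 := by
        intro j hj
        have hsub : ({s, j} : Finset (Fin N)) ⊆ Finset.univ := Finset.subset_univ _
        have := Finset.sum_le_sum_of_subset hsub (f := x)
        rw [Finset.sum_pair (fun e => hj e.symm), hx] at this
        omega
      refine ⟨0, ?_⟩
      have heq : (fun i => (x i : ℝ) / (n : ℕ)) = delta s := by
        funext i
        by_cases hi : i = s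
        · subst hi; simp [delta, hxs, ← h1]
        · simp [delta, hi, hzero i hi]
      rw [heq]
      exact Realizable.point s
    · -- n ≥ 2
      set p := n.minFac with hpdef
      have hp : p.Prime := Nat.minFac_prime (by omega)
      have hpd : p ∣ n := Nat.minFac_dvd n
      have hp2 : 2 ≤ p := hp.two_le
      obtain ⟨r, hrdef⟩ : ∃ r, r = n / p := ⟨_, rfl⟩
      have hnr : n = p * r := by rw [hrdef]; exact (Nat.mul_div_cancel' hpd).symm
      have hr1 : 1 ≤ r := by rw [hrdef]; exact Nat.div_pos (Nat.minFac_le (by omega)) (by omega)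
      obtain ⟨c, hcdef⟩ : ∃ c, c = (p - 1) * r := ⟨_, rfl⟩
      have hc1 : 1 ≤ c := by
        rw [hcdef]
        have : 0 < p - 1 := by omega
        exact Nat.mul_pos this hr1
      have hcn : c + r = n := by
        have h3 : (p - 1) * r + r = (p - 1 + 1) * r := by ring
        rw [hcdef, h3, show p - 1 + 1 = p by omega, ← hnr]
      have hp_le : p ≤ pmax := hfac p (Nat.mem_primeFactors.mpr ⟨hp, hpd, by omega⟩)
      -- prefix sums
      set x' : ℕ → ℕ := fun j => if h : j < N then x ⟨j, h⟩ else 0 with hx'def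
      set S : ℕ → ℕ := fun m => ∑ j ∈ Finset.range m, x' j with hSdef
      have hSmono : Monotone S := fun a b h =>
        Finset.sum_le_sum_of_subset (Finset.range_subset_range.mpr h)
      have hx'i : ∀ i : Fin N, x' (i : ℕ) = x i := by
        intro i; simp [hx'def, i.isLt]
      have hSN : S N = n := by
        rw [← hx, show S N = ∑ j ∈ Finset.range N, x' j from rfl,
          ← Fin.sum_univ_eq_sum_range x' N]
        exact Finset.sum_congr rfl fun i _ => hx'i i
      have hSN' : S N = n := hSN
      have hS : ∀ k : Fin N, S ((k : ℕ) + 1) = S (k : ℕ) + x k := by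
        intro k
        rw [hSdef]
        simp only []
        rw [Finset.sum_range_succ, hx'i]
      set b : Fin N → ℕ := fun k => min c (S ((k : ℕ) + 1)) - min c (S (k : ℕ)) with hbdef
      set t : Fin N → ℕ := fun k => x k - b k with htdef
      have hminmono : ∀ k : Fin N, min c (S (k : ℕ)) ≤ min c (S ((k : ℕ) + 1)) := by
        intro k
        have := hSmono (show (k : ℕ) ≤ (k : ℕ) + 1 by omega)
        omega
      have hble : ∀ k, b k ≤ x k := by
        intro k
        have h := hS k
        simp only [hbdef]
        omega
      have hbt : ∀ k, b k + t k = x k := by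
        intro k
        have := hble k
        simp only [htdef]
        omega
      have hsum_b : ∑ k, b k = c := by
        have htel : ∑ j ∈ Finset.range N,
            (min c (S (j + 1)) - min c (S j)) = min c (S N) - min c (S 0) :=
          Finset.sum_range_tsub (f := fun j => min c (S j))
            (fun a bb h => by have := hSmono h; exact min_le_min le_rfl this) N
        have h4 : ∑ k : Fin N, b k = ∑ j ∈ Finset.range N, (min c (S (j + 1)) - min c (S j)) := by
          simp only [hbdef]
          exact Fin.sum_univ_eq_sum_range (fun j => min c (S (j + 1)) - min c (S j)) N
        rw [h4, htel, hSN, show S 0 = 0 from rfl]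
        omega
      have hsum_t : ∑ k, t k = r := by
        have : ∑ k, (b k + t k) = n := by
          rw [← hx]; exact Finset.sum_congr rfl fun k _ => hbt k
        rw [Finset.sum_add_distrib, hsum_b] at this
        omega
      have hsep : ∀ i j : Fin N, t i ≠ 0 → b j ≠ 0 → j ≤ i := by
        intro i j hti hbj
        have hti' : c < S ((i : ℕ) + 1) := by
          have h1' := hS i
          have h2' := hble i
          simp only [htdef, hbdef] at hti ⊢
          omega
        have hbj' : S (j : ℕ) < c := by
          simp only [hbdef] at hbj
          omega
        by_contra hc'
        push_neg at hc'
        have : (i : ℕ) + 1 ≤ (j : ℕ) := by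
          have := hc'
          rw [Fin.lt_def] at this
          omega
        have := hSmono this
        omega
      -- prime factor bounds for c and r
      have hr0 : r ≠ 0 := by omega
      have hfac_r : ∀ u ∈ r.primeFactors, u ≤ pmax := by
        intro u hu
        exact hfac u (Nat.primeFactors_mono ⟨p, by rw [hnr]; ring⟩ (by omega) hu)
      have hfac_c : ∀ u ∈ c.primeFactors, u ≤ pmax := by
        intro u hu
        rw [Nat.mem_primeFactors] at hu
        obtain ⟨hup, hud, -⟩ := hu
        rw [hcdef] at hud
        rcases (Nat.Prime.dvd_mul hup).mp hud with h | h
        · have : u ≤ p - 1 := Nat.le_of_dvd (by omega) h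
          omega
        · exact hfac_r u (Nat.mem_primeFactors.mpr ⟨hup, h, hr0⟩)
      -- induction hypotheses
      obtain ⟨m1, hreal_b⟩ := IH c (by omega) hc1 hfac_c b hsum_b
      obtain ⟨m2, hreal_t⟩ := IH r (by omega) hr1 hfac_r t hsum_t
      set ul : Fin N → ℝ := fun i => (b i : ℝ) / (c : ℕ) with huldef
      set uh : Fin N → ℝ := fun i => (t i : ℝ) / (r : ℕ) with huhdef
      have hw : qSwitch N p ∈ {v : Fin N → ℝ | ∃ u : ℕ, u.Prime ∧ u ≤ pmax ∧ v = qSwitch N u} :=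
        ⟨p, hp, hp_le, rfl⟩
      have hA : Realizable _ (smin (qSwitch N p) uh) (1 + m2) :=
        Realizable.series (Realizable.single hw) hreal_t
      have hV : Realizable _ (smax (smin (qSwitch N p) uh) ul) ((1 + m2) + m1) :=
        Realizable.parallel hA hreal_b
      -- sums to one
      have hrR : ((r : ℕ) : ℝ) ≠ 0 := Nat.cast_ne_zero.mpr hr0
      have hcR : ((c : ℕ) : ℝ) ≠ 0 := Nat.cast_ne_zero.mpr (by omega)
      have hpR : ((p : ℕ) : ℝ) ≠ 0 := Nat.cast_ne_zero.mpr (by omega)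
      have hsum_uh : ∑ j, uh j = 1 := by
        simp only [huhdef]
        rw [← Finset.sum_div]
        rw [show ∑ j, ((t j : ℝ)) = ((∑ j, t j : ℕ) : ℝ) by push_cast; ring, hsum_t]
        exact div_self hrR
      have hsum_ul : ∑ j, ul j = 1 := by
        simp only [huldef]
        rw [← Finset.sum_div]
        rw [show ∑ j, ((b j : ℝ)) = ((∑ j, b j : ℕ) : ℝ) by push_cast; ring, hsum_b]
        exact div_self hcR
      have hsepR : ∀ i j, uh i ≠ 0 → ul j ≠ 0 → j ≤ i := by
        intro i j hi hj
        refine hsep i j (fun h => hi ?_) (fun h => hj ?_)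
        · simp [huhdef, h]
        · simp [huldef, h]
      -- the closed form of the inner series composition
      have hA_eq : smin (qSwitch N p) uh
          = fun k : Fin N => (if (k : ℕ) = 0 then ((p : ℝ) - 1) / (p : ℝ) else 0)
              + (1 / (p : ℝ)) * uh k := by
        funext k
        have : smin (qSwitch N p) uh k
            = smin (fun i => if (i : ℕ) = 0 then ((p : ℝ) - 1) / (p : ℝ) else 0) uh k
              + smin (fun i => if (i : ℕ) = N - 1 then 1 / (p : ℝ) else 0) uh k := by
          rw [← smin_add_left]
          rfl
        rw [this, smin_dz hN, smin_dtop hN, hsum_uh]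
        by_cases hk : (k : ℕ) = 0 <;> simp [hk]
      have heq : smax (smin (qSwitch N p) uh) ul = fun i => (x i : ℝ) / (n : ℕ) := by
        funext k
        rw [hA_eq]
        rw [smax_add_left, smax_dz hN, smax_smul_left, smax_ordered uh ul hsum_ul hsepR]
        -- arithmetic
        have hxk : (x k : ℝ) = (b k : ℝ) + (t k : ℝ) := by
          rw [← hbt k]; push_cast; ring
        simp only [huldef, huhdef]
        rw [hxk, hnr]
        have hcR' : ((c : ℕ) : ℝ) = ((p : ℝ) - 1) * (r : ℝ) := by
          rw [hcdef]
          push_cast [Nat.cast_sub hp.one_le]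
          ring
        rw [hcR']
        have hp1R : (p : ℝ) - 1 ≠ 0 := by
          have : (2 : ℝ) ≤ (p : ℝ) := by exact_mod_cast hp2
          linarith
        push_cast
        field_simp
      exact ⟨(1 + m2) + m1, heq ▸ hV⟩


end AuxLemmas

/-- Prime switch sets suffice: if `pmax` is the largest prime factor of `q`,
then any `(x₀/q, …, x_{N-1}/q)` is realizable from the switch set
`{w_p : p prime, p ≤ pmax}` with some finite number of pswitches. -/
theorem prime_switch_set (N : ℕ) (hN : 1 ≤ N) (q : ℕ) (hq : 2 ≤ q)
    (pmax : ℕ) (hmem : pmax ∈ q.primeFactors) (hmax : ∀ t ∈ q.primeFactors, t ≤ pmax)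
    (x : Fin N → ℕ) (hx : ∑ k, x k = q) :
    ∃ m, Realizable
      {v : Fin N → ℝ | ∃ t : ℕ, t.Prime ∧ t ≤ pmax ∧ v = qSwitch N t}
      (fun i => (x i : ℝ) / q) m :=
  key N hN pmax q (by omega) hmax x hx
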